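/- Let f be an L(1,2)-edge labeling of T8, let S be a unit square, and let c ≥ 1. Suppose e, e', e'' ∈ G_S are the three edges of a triangle of T8, with e slanting, f(e) = c, f(e') = c − 1 and f(e'') = c + 1. Then there exists a unit square S1 with all vertices in S' such that no edge in G_{S1} has label c under f. -/

import Mathlib

/-- The infinite octagonal grid (king graph on `ℤ × ℤ`): distinct vertices are
adjacent iff their Chebyshev distance is `1`. -/
def T8 : SimpleGraph (ℤ × ℤ) where
  Adj u v := u ≠ v ∧ max |u.1 - v.1| |u.2 - v.2| = 1
  symm := by
    constructor
    rintro u v ⟨h1, h2⟩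
    refine ⟨h1.symm, ?_⟩
    rw [abs_sub_comm v.1 u.1, abs_sub_comm v.2 u.2]
    exact h2
  loopless := by constructor; rintro u ⟨h, -⟩; exact h rfl

/-- Two (unordered pairs regarded as) edges share an endpoint. -/
def SharesEndpoint (e1 e2 : Sym2 (ℤ × ℤ)) : Prop := ∃ v, v ∈ e1 ∧ v ∈ e2

/-- Two edges of `T8` are at distance `1`: distinct and sharing an endpoint. -/
def EdgeDist1 (e1 e2 : Sym2 (ℤ × ℤ)) : Prop := e1 ≠ e2 ∧ SharesEndpoint e1 e2

/-- Two edges of `T8` are at distance `2`: distinct, sharing no endpoint, but some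
edge of `T8` shares an endpoint with both. -/
def EdgeDist2 (e1 e2 : Sym2 (ℤ × ℤ)) : Prop :=
  e1 ≠ e2 ∧ ¬ SharesEndpoint e1 e2 ∧
    ∃ e3 ∈ T8.edgeSet, SharesEndpoint e1 e3 ∧ SharesEndpoint e3 e2

/-- `f` is an `L(1,2)`-edge labeling of `T8`: edges at distance `1` get distinct
labels and edges at distance `2` get labels differing by at least `2`. -/
def IsL12 (f : Sym2 (ℤ × ℤ) → ℕ) : Prop :=
  (∀ e1 ∈ T8.edgeSet, ∀ e2 ∈ T8.edgeSet, EdgeDist1 e1 e2 → f e1 ≠ f e2) ∧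
  (∀ e1 ∈ T8.edgeSet, ∀ e2 ∈ T8.edgeSet, EdgeDist2 e1 e2 → 2 ≤ |(f e1 : ℤ) - (f e2 : ℤ)|)

/-- An `L(1,2)`-edge labeling of `T8` with labels in `{0, …, n}`. -/
def IsL12Bounded (n : ℕ) (f : Sym2 (ℤ × ℤ) → ℕ) : Prop :=
  IsL12 f ∧ ∀ e ∈ T8.edgeSet, f e ≤ n

/-- The unit square `S(a,b)`. -/
def unitSquare (a b : ℤ) : Set (ℤ × ℤ) :=
  {(a, b), (a + 1, b), (a, b + 1), (a + 1, b + 1)}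

/-- `GS S`: the set of edges of `T8` incident to at least one vertex of `S`. -/
def GS (S : Set (ℤ × ℤ)) : Set (Sym2 (ℤ × ℤ)) :=
  {e | e ∈ T8.edgeSet ∧ ∃ v ∈ S, v ∈ e}

/-- `Sprime a b`: vertices at Chebyshev distance at most `2` from some vertex of
`S(a,b)` (that is, `S ∪ N(S) ∪ N(N(S))`). -/
def Sprime (a b : ℤ) : Set (ℤ × ℤ) :=
  {u | ∃ v ∈ unitSquare a b, max |u.1 - v.1| |u.2 - v.2| ≤ 2}

/-- Two edges sharing an endpoint `v`, written `e1 = {v, v+d1}` and `e2 = {v, v+d2}`,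
are at angle `45°` if exactly one of `d1, d2` has both coordinates nonzero and
`d1 · d2 = 1`. -/
def Angle45 (e1 e2 : Sym2 (ℤ × ℤ)) : Prop :=
  ∃ v d1 d2 : ℤ × ℤ, e1 = s(v, v + d1) ∧ e2 = s(v, v + d2) ∧
    Xor' (d1.1 ≠ 0 ∧ d1.2 ≠ 0) (d2.1 ≠ 0 ∧ d2.2 ≠ 0) ∧
    d1.1 * d2.1 + d1.2 * d2.2 = 1

/-- An edge is slanting if its endpoints differ in both coordinates. -/
def Slanting (e : Sym2 (ℤ × ℤ)) : Prop :=
  ∃ u v : ℤ × ℤ, e = s(u, v) ∧ u.1 ≠ v.1 ∧ u.2 ≠ v.2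

/-- `e, e', e''` form the edge set of a triangle of `T8`. -/
def TriangleEdgeSet (e e' e'' : Sym2 (ℤ × ℤ)) : Prop :=
  ∃ u v w : ℤ × ℤ, T8.Adj u v ∧ T8.Adj v w ∧ T8.Adj u w ∧
    ({e, e', e''} : Set (Sym2 (ℤ × ℤ))) = {s(u, v), s(v, w), s(u, w)}

/-- A triangle of `T8`: three pairwise adjacent vertices. -/
def IsTriangle (t : Finset (ℤ × ℤ)) : Prop :=
  t.card = 3 ∧ ∀ u ∈ t, ∀ v ∈ t, u ≠ v → T8.Adj u v

/-- The edges of a triangle. -/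
def triangleEdges (t : Finset (ℤ × ℤ)) : Set (Sym2 (ℤ × ℤ)) :=
  {e | ∃ u ∈ t, ∃ v ∈ t, u ≠ v ∧ e = s(u, v)}


lemma adj_iff' (u v : ℤ × ℤ) : T8.Adj u v ↔
    ((u.1 ≠ v.1 ∨ u.2 ≠ v.2) ∧ u.1 - v.1 ≤ 1 ∧ v.1 - u.1 ≤ 1 ∧ u.2 - v.2 ≤ 1 ∧ v.2 - u.2 ≤ 1) := by
  constructor
  · rintro ⟨hne, hmax⟩
    have h1 : |u.1 - v.1| ≤ 1 := hmax ▸ le_max_left _ _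
    have h2 : |u.2 - v.2| ≤ 1 := hmax ▸ le_max_right _ _
    rw [abs_le] at h1 h2
    refine ⟨?_, by omega, by omega, by omega, by omega⟩
    by_contra h
    push_neg at h
    exact hne (Prod.ext h.1 h.2)
  · rintro ⟨hne, h1, h2, h3, h4⟩
    have hne' : u ≠ v := by
      intro he; subst he; simp at hne
    refine ⟨hne', le_antisymm (max_le (abs_le.mpr ⟨by omega, h1⟩) (abs_le.mpr ⟨by omega, h3⟩)) ?_⟩
    rcases hne with h | h
    · exact le_trans (Int.one_le_abs (by omega)) (le_max_left _ _)
    · exact le_trans (Int.one_le_abs (by omega)) (le_max_right _ _)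

lemma far_of_not_adj (u w : ℤ × ℤ) (hne : u ≠ w) (hna : ¬ T8.Adj u w) :
    2 ≤ u.1 - w.1 ∨ 2 ≤ w.1 - u.1 ∨ 2 ≤ u.2 - w.2 ∨ 2 ≤ w.2 - u.2 := by
  rw [adj_iff'] at hna
  have hd : u.1 ≠ w.1 ∨ u.2 ≠ w.2 := by
    by_contra hh
    push_neg at hh
    exact hne (Prod.ext hh.1 hh.2)
  by_contra h
  push_neg at h
  exact hna ⟨hd, by omega, by omega, by omega, by omega⟩

set_option maxHeartbeats 1000000 in
/-- Key lemma: given the labeled triangle `P Q R` with slanting edge `s(P,Q)`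
labeled `c` and an edge `e'` (containing `R`) labeled `c-1`, any unit square whose
vertices avoid `P, Q` and stay within Chebyshev distance 1 of `R` has no incident
edge labeled `c`. -/
lemma key_lemma (f : Sym2 (ℤ × ℤ) → ℕ) (hf : IsL12 f) (c : ℕ) (hc : 1 ≤ c)
    (P Q R : ℤ × ℤ) (e' : Sym2 (ℤ × ℤ))
    (hPQ : T8.Adj P Q) (hPR : T8.Adj P R) (hQR : T8.Adj Q R)
    (hfe : f s(P, Q) = c) (he'mem : e' ∈ T8.edgeSet) (hfe' : f e' = c - 1)
    (he' : e' = s(P, R) ∨ e' = s(Q, R))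
    (a1 b1 : ℤ)
    (hsq : ∀ v ∈ unitSquare a1 b1, v ≠ P ∧ v ≠ Q ∧
      R.1 - v.1 ≤ 1 ∧ v.1 - R.1 ≤ 1 ∧ R.2 - v.2 ≤ 1 ∧ v.2 - R.2 ≤ 1) :
    ∀ g ∈ GS (unitSquare a1 b1), f g ≠ c := by
  have hcast : ((c - 1 : ℕ) : ℤ) = (c : ℤ) - 1 := by omega
  intro g hg hgc
  obtain ⟨hgE, v, hvS1, hvg⟩ := hg
  obtain ⟨z, rfl⟩ := Sym2.mem_iff_exists.mp hvg
  have hvz : T8.Adj v z := T8.mem_edgeSet.mp hgE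
  obtain ⟨hvP, hvQ, hb1, hb2, hb3, hb4⟩ := hsq v hvS1
  have ePQ : s(P, Q) ∈ T8.edgeSet := T8.mem_edgeSet.mpr hPQ
  have lPQ := (adj_iff' P Q).mp hPQ
  have lPR := (adj_iff' P R).mp hPR
  have lQR := (adj_iff' Q R).mp hQR
  by_cases hzPQ : z = P ∨ z = Q
  · -- g shares endpoint z with e = s(P,Q) : edges at distance 1
    have hgne : s(v, z) ≠ s(P, Q) := by
      intro h
      rcases Sym2.eq_iff.mp h with ⟨h1, h2⟩ | ⟨h1, h2⟩
      exacts [hvP h1, hvQ h1]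
    have hshare : SharesEndpoint s(v, z) s(P, Q) := by
      refine ⟨z, Sym2.mem_mk_right _ _, ?_⟩
      rcases hzPQ with rfl | rfl
      exacts [Sym2.mem_mk_left _ _, Sym2.mem_mk_right _ _]
    exact hf.1 _ hgE _ ePQ ⟨hgne, hshare⟩ (by rw [hgc, hfe])
  push_neg at hzPQ
  obtain ⟨hzP, hzQ⟩ := hzPQ
  have hnshe : ¬ SharesEndpoint s(v, z) s(P, Q) := by
    rintro ⟨w0, hw0g, hw0e⟩
    rw [Sym2.mem_iff] at hw0g hw0e
    rcases hw0g with rfl | rfl <;> rcases hw0e with h | h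
    exacts [hvP h, hvQ h, hzP h, hzQ h]
  have hgnePQ : s(v, z) ≠ s(P, Q) := by
    intro h
    exact hnshe ⟨v, Sym2.mem_mk_left _ _, h ▸ Sym2.mem_mk_left _ _⟩
  by_cases Hn : ∃ w0 y0 : ℤ × ℤ, (w0 = v ∨ w0 = z) ∧ (y0 = P ∨ y0 = Q) ∧ T8.Adj w0 y0
  · -- g at distance 2 from e = s(P,Q)
    obtain ⟨w0, y0, hw0, hy0, hadj⟩ := Hn
    have hdist2 : EdgeDist2 s(v, z) s(P, Q) := by
      refine ⟨hgnePQ, hnshe, s(w0, y0), T8.mem_edgeSet.mpr hadj, ⟨w0, ?_, Sym2.mem_mk_left _ _⟩,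
        ⟨y0, Sym2.mem_mk_right _ _, ?_⟩⟩
      · rcases hw0 with rfl | rfl
        exacts [Sym2.mem_mk_left _ _, Sym2.mem_mk_right _ _]
      · rcases hy0 with rfl | rfl
        exacts [Sym2.mem_mk_left _ _, Sym2.mem_mk_right _ _]
    have h2 := hf.2 _ hgE _ ePQ hdist2
    rw [hgc, hfe] at h2
    simp at h2
  · -- g at distance 2 from e'
    push_neg at Hn
    have fvP := far_of_not_adj v P hvP (Hn v P (Or.inl rfl) (Or.inl rfl))
    have fvQ := far_of_not_adj v Q hvQ (Hn v Q (Or.inl rfl) (Or.inr rfl))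
    have fzP := far_of_not_adj z P hzP (Hn z P (Or.inr rfl) (Or.inl rfl))
    have fzQ := far_of_not_adj z Q hzQ (Hn z Q (Or.inr rfl) (Or.inr rfl))
    have lvz := (adj_iff' v z).mp hvz
    have hvR : v.1 ≠ R.1 ∨ v.2 ≠ R.2 := by omega
    have hzR : z.1 ≠ R.1 ∨ z.2 ≠ R.2 := by omega
    have hvRne : v ≠ R := by
      intro h; subst h; rcases hvR with h | h <;> exact h rfl
    have hzRne : z ≠ R := by
      intro h; subst h; rcases hzR with h | h <;> exact h rfl
    have hadjvR : T8.Adj v R := (adj_iff' v R).mpr ⟨hvR, by omega, by omega, by omega, by omega⟩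
    have hRmem : R ∈ e' := by
      rcases he' with rfl | rfl <;> exact Sym2.mem_mk_right _ _
    have hXmem : ∀ w0 ∈ e', w0 = P ∨ w0 = Q ∨ w0 = R := by
      intro w0 hw0
      rcases he' with rfl | rfl <;> rw [Sym2.mem_iff] at hw0
      · rcases hw0 with h | h
        exacts [Or.inl h, Or.inr (Or.inr h)]
      · rcases hw0 with h | h
        exacts [Or.inr (Or.inl h), Or.inr (Or.inr h)]
    have hnshe' : ¬ SharesEndpoint s(v, z) e' := by
      rintro ⟨w0, hw0g, hw0e⟩
      rw [Sym2.mem_iff] at hw0g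
      have := hXmem w0 hw0e
      rcases hw0g with rfl | rfl <;> rcases this with h | h | h
      exacts [hvP h, hvQ h, hvRne h, hzP h, hzQ h, hzRne h]
    have hgnee' : s(v, z) ≠ e' := by
      intro h
      exact hnshe' ⟨v, Sym2.mem_mk_left _ _, h ▸ Sym2.mem_mk_left _ _⟩
    have hdist2 : EdgeDist2 s(v, z) e' := by
      exact ⟨hgnee', hnshe', s(v, R), T8.mem_edgeSet.mpr hadjvR,
        ⟨v, Sym2.mem_mk_left _ _, Sym2.mem_mk_left _ _⟩,
        ⟨R, Sym2.mem_mk_right _ _, hRmem⟩⟩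
    have h2 := hf.2 _ hgE _ he'mem hdist2
    rw [hgc, hfe'] at h2
    rw [hcast] at h2
    have h3 : (c : ℤ) - ((c : ℤ) - 1) = 1 := by ring
    rw [h3] at h2
    norm_num at h2

lemma mem_sprime_of (a b : ℤ) (u x0 : ℤ × ℤ) (hx0 : x0 ∈ unitSquare a b)
    (h1 : u.1 - x0.1 ≤ 2) (h2 : x0.1 - u.1 ≤ 2) (h3 : u.2 - x0.2 ≤ 2) (h4 : x0.2 - u.2 ≤ 2) :
    u ∈ Sprime a b :=
  ⟨x0, hx0, max_le (abs_le.mpr ⟨by omega, h1⟩) (abs_le.mpr ⟨by omega, h3⟩)⟩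

lemma main_aux (f : Sym2 (ℤ × ℤ) → ℕ) (hf : IsL12 f) (a b : ℤ) (c : ℕ) (hc : 1 ≤ c)
    (P Q R : ℤ × ℤ) (e' : Sym2 (ℤ × ℤ)) (x0 : ℤ × ℤ)
    (hx0 : x0 ∈ unitSquare a b) (hx0e : x0 = P ∨ x0 = Q)
    (hPQ : T8.Adj P Q) (hPR : T8.Adj P R) (hQR : T8.Adj Q R)
    (hd1 : P.1 ≠ Q.1) (hd2 : P.2 ≠ Q.2) (hR1 : R.1 = P.1) (hR2 : R.2 = Q.2)
    (hfe : f s(P, Q) = c) (he'mem : e' ∈ T8.edgeSet) (hfe' : f e' = c - 1)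
    (he' : e' = s(P, R) ∨ e' = s(Q, R)) :
    ∃ p : ℤ × ℤ, unitSquare p.1 p.2 ⊆ Sprime a b ∧
      ∀ e1 ∈ GS (unitSquare p.1 p.2), f e1 ≠ c := by
  have lPQ := (adj_iff' P Q).mp hPQ
  have hx0c : (x0.1 = P.1 ∧ x0.2 = P.2) ∨ (x0.1 = Q.1 ∧ x0.2 = Q.2) := by
    rcases hx0e with rfl | rfl
    · exact Or.inl ⟨rfl, rfl⟩
    · exact Or.inr ⟨rfl, rfl⟩
  have hq1 : Q.1 = P.1 + 1 ∨ Q.1 = P.1 - 1 := by omega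
  have hq2 : Q.2 = P.2 + 1 ∨ Q.2 = P.2 - 1 := by omega
  -- choose the square
  obtain ⟨a1, b1, hsq⟩ : ∃ a1 b1 : ℤ, ∀ v ∈ unitSquare a1 b1, v ≠ P ∧ v ≠ Q ∧
      R.1 - v.1 ≤ 1 ∧ v.1 - R.1 ≤ 1 ∧ R.2 - v.2 ≤ 1 ∧ v.2 - R.2 ≤ 1 := by
    rcases hq1 with hq1 | hq1 <;> rcases hq2 with hq2 | hq2
    · refine ⟨P.1 - 1, P.2 + 1, ?_⟩
      intro v hv
      simp only [unitSquare, Set.mem_insert_iff, Set.mem_singleton_iff, Prod.ext_iff, ne_eq] at hv ⊢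
      omega
    · refine ⟨P.1 - 1, P.2 - 2, ?_⟩
      intro v hv
      simp only [unitSquare, Set.mem_insert_iff, Set.mem_singleton_iff, Prod.ext_iff, ne_eq] at hv ⊢
      omega
    · refine ⟨P.1, P.2 + 1, ?_⟩
      intro v hv
      simp only [unitSquare, Set.mem_insert_iff, Set.mem_singleton_iff, Prod.ext_iff, ne_eq] at hv ⊢
      omega
    · refine ⟨P.1, P.2 - 2, ?_⟩
      intro v hv
      simp only [unitSquare, Set.mem_insert_iff, Set.mem_singleton_iff, Prod.ext_iff, ne_eq] at hv ⊢
      omega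
  refine ⟨(a1, b1), ?_, key_lemma f hf c hc P Q R e' hPQ hPR hQR hfe he'mem hfe' he' a1 b1 hsq⟩
  intro v hv
  obtain ⟨hvP, hvQ, hb1, hb2, hb3, hb4⟩ := hsq v hv
  exact mem_sprime_of a b v x0 hx0 (by omega) (by omega) (by omega) (by omega)

lemma stage2 (f : Sym2 (ℤ × ℤ) → ℕ) (hf : IsL12 f) (a b : ℤ) (c : ℕ) (hc : 1 ≤ c)
    (P Q R : ℤ × ℤ) (e' : Sym2 (ℤ × ℤ)) (x0 : ℤ × ℤ)
    (hx0 : x0 ∈ unitSquare a b) (hx0e : x0 = P ∨ x0 = Q)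
    (hPQ : T8.Adj P Q) (hPR : T8.Adj P R) (hQR : T8.Adj Q R)
    (hd1 : P.1 ≠ Q.1) (hd2 : P.2 ≠ Q.2)
    (hfe : f s(P, Q) = c) (he'E : e' ∈ T8.edgeSet) (hfe' : f e' = c - 1)
    (he' : e' = s(P, R) ∨ e' = s(Q, R)) :
    ∃ p : ℤ × ℤ, unitSquare p.1 p.2 ⊆ Sprime a b ∧
      ∀ e1 ∈ GS (unitSquare p.1 p.2), f e1 ≠ c := by
  have lPQ := (adj_iff' P Q).mp hPQ
  have lPR := (adj_iff' P R).mp hPR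
  have lQR := (adj_iff' Q R).mp hQR
  have hRpos : (R.1 = P.1 ∧ R.2 = Q.2) ∨ (R.1 = Q.1 ∧ R.2 = P.2) := by omega
  rcases hRpos with ⟨h1, h2⟩ | ⟨h1, h2⟩
  · exact main_aux f hf a b c hc P Q R e' x0 hx0 hx0e hPQ hPR hQR hd1 hd2 h1 h2
      hfe he'E hfe' he'
  · exact main_aux f hf a b c hc Q P R e' x0 hx0 hx0e.symm hPQ.symm hQR hPR
      (fun hh => hd1 hh.symm) (fun hh => hd2 hh.symm) h1 h2
      (by rw [Sym2.eq_swap]; exact hfe) he'E hfe' he'.symm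

/-- If three consecutive labels `c-1, c, c+1` are used on the three
edges of a triangle in `G_S` with `c` on the slanting edge, then there is a unit
square `S1` with all vertices in `S'` on which `c` is not used. -/
theorem triangle_slanting_one_square (f : Sym2 (ℤ × ℤ) → ℕ) (hf : IsL12 f)
    (a b : ℤ) (c : ℕ) (hc : 1 ≤ c) (e e' e'' : Sym2 (ℤ × ℤ))
    (he : e ∈ GS (unitSquare a b)) (he' : e' ∈ GS (unitSquare a b))
    (he'' : e'' ∈ GS (unitSquare a b))
    (htri : TriangleEdgeSet e e' e'') (hsl : Slanting e)
    (hfe : f e = c) (hfe' : f e' = c - 1) (hfe'' : f e'' = c + 1) :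
    ∃ p : ℤ × ℤ, unitSquare p.1 p.2 ⊆ Sprime a b ∧
      ∀ e1 ∈ GS (unitSquare p.1 p.2), f e1 ≠ c := by
  obtain ⟨heE, x0, hx0S, hx0e⟩ := he
  obtain ⟨he'E, -⟩ := he'
  obtain ⟨u, v, w, huv, hvw, huw, hset⟩ := htri
  have heM : e = s(u, v) ∨ e = s(v, w) ∨ e = s(u, w) := by
    have h : e ∈ ({s(u, v), s(v, w), s(u, w)} : Set (Sym2 (ℤ × ℤ))) := by
      rw [← hset]; simp
    simpa using h
  have he'M : e' = s(u, v) ∨ e' = s(v, w) ∨ e' = s(u, w) := by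
    have h : e' ∈ ({s(u, v), s(v, w), s(u, w)} : Set (Sym2 (ℤ × ℤ))) := by
      rw [← hset]; simp
    simpa using h
  have hnee' : e' ≠ e := by
    intro h; rw [h, hfe] at hfe'; omega
  obtain ⟨α, β, heαβ, hα1, hα2⟩ := hsl
  have slant : ∀ X Y : ℤ × ℤ, e = s(X, Y) → X.1 ≠ Y.1 ∧ X.2 ≠ Y.2 := by
    intro X Y hXY
    rcases Sym2.eq_iff.mp (heαβ.symm.trans hXY) with ⟨h1, h2⟩ | ⟨h1, h2⟩
    · subst h1; subst h2; exact ⟨hα1, hα2⟩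
    · subst h1; subst h2; exact ⟨fun hh => hα1 hh.symm, fun hh => hα2 hh.symm⟩
  rcases heM with h | h | h
  · -- e = s(u,v), P = u, Q = v, R = w
    obtain ⟨hd1, hd2⟩ := slant u v h
    have hx0e' : x0 = u ∨ x0 = v := Sym2.mem_iff.mp (h ▸ hx0e)
    have he'd : e' = s(u, w) ∨ e' = s(v, w) := by
      rcases he'M with h' | h' | h'
      · exact absurd (h'.trans h.symm) hnee'
      · exact Or.inr h'
      · exact Or.inl h'
    exact stage2 f hf a b c hc u v w e' x0 hx0S hx0e' huv huw hvw hd1 hd2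
      (h ▸ hfe) he'E hfe' he'd
  · -- e = s(v,w), P = v, Q = w, R = u
    obtain ⟨hd1, hd2⟩ := slant v w h
    have hx0e' : x0 = v ∨ x0 = w := Sym2.mem_iff.mp (h ▸ hx0e)
    have he'd : e' = s(v, u) ∨ e' = s(w, u) := by
      rcases he'M with h' | h' | h'
      · exact Or.inl (h'.trans (Sym2.eq_swap))
      · exact absurd (h'.trans h.symm) hnee'
      · exact Or.inr (h'.trans (Sym2.eq_swap))
    exact stage2 f hf a b c hc v w u e' x0 hx0S hx0e' hvw huv.symm huw.symm hd1 hd2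
      (h ▸ hfe) he'E hfe' he'd
  · -- e = s(u,w), P = u, Q = w, R = v
    obtain ⟨hd1, hd2⟩ := slant u w h
    have hx0e' : x0 = u ∨ x0 = w := Sym2.mem_iff.mp (h ▸ hx0e)
    have he'd : e' = s(u, v) ∨ e' = s(w, v) := by
      rcases he'M with h' | h' | h'
      · exact Or.inl h'
      · exact Or.inr (h'.trans (Sym2.eq_swap))
      · exact absurd (h'.trans h.symm) hnee'
    exact stage2 f hf a b c hc u w v e' x0 hx0S hx0e' huw huv hvw.symm hd1 hd2
      (h ▸ hfe) he'E hfe' he'd
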